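/- For a contraction T on a complex Hilbert space, ker(A_T − I) = {x ∈ H : ‖T^n x‖ = ‖x‖ for all n}, i.e. the set of vectors on whose generated orbit T acts isometrically; equivalently x ∈ ker(A_T − I) iff lim_n ‖T^n x‖ = ‖x‖. -/

import Mathlib

open Filter Topology ContinuousLinearMap

/-- For a contraction `T` with asymptotic limit `A` (SOT-limit of `T^{*n}T^n`),
`ker (A - I)` is the set of vectors on which all powers of `T` act isometrically;
equivalently `x ∈ ker (A - I)` iff `‖T^n x‖ → ‖x‖`. -/
theorem stmt3 {H : Type*} [NormedAddCommGroup H] [InnerProductSpace ℂ H] [CompleteSpace H]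
    (T : H →L[ℂ] H) (hT : ‖T‖ ≤ 1) (A : H →L[ℂ] H)
    (hA : ∀ x : H, Tendsto (fun n : ℕ => (ContinuousLinearMap.adjoint (T ^ n)) ((T ^ n) x))
      atTop (𝓝 (A x))) :
    ∀ x : H, (A x = x ↔ ∀ n : ℕ, ‖(T ^ n) x‖ = ‖x‖) ∧
      (A x = x ↔ Tendsto (fun n : ℕ => ‖(T ^ n) x‖) atTop (𝓝 ‖x‖)) := by
  intro x
  -- powers are contractions on vectors
  have hTnx : ∀ (n : ℕ) (y : H), ‖(T ^ n) y‖ ≤ ‖y‖ := by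
    intro n
    induction n with
    | zero => simp
    | succ n ih =>
      intro y
      have : (T ^ (n + 1)) y = T ((T ^ n) y) := by
        rw [pow_succ']; rfl
      rw [this]
      calc ‖T ((T ^ n) y)‖ ≤ ‖T‖ * ‖(T ^ n) y‖ := T.le_opNorm _
        _ ≤ 1 * ‖y‖ := by
            exact mul_le_mul hT (ih y) (norm_nonneg _) zero_le_one
        _ = ‖y‖ := one_mul _
  have hf_le : ∀ n : ℕ, ‖(T ^ n) x‖ ≤ ‖x‖ := fun n => hTnx n x
  have hanti : Antitone (fun n : ℕ => ‖(T ^ n) x‖) := by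
    apply antitone_nat_of_succ_le
    intro n
    have : (T ^ (n + 1)) x = T ((T ^ n) x) := by rw [pow_succ']; rfl
    rw [this]
    calc ‖T ((T ^ n) x)‖ ≤ ‖T‖ * ‖(T ^ n) x‖ := T.le_opNorm _
      _ ≤ 1 * ‖(T ^ n) x‖ := by
          exact mul_le_mul_of_nonneg_right hT (norm_nonneg _)
      _ = _ := one_mul _
  -- inner products converge
  have hinner : Tendsto (fun n : ℕ => (inner ℂ ((ContinuousLinearMap.adjoint (T ^ n)) ((T ^ n) x)) x : ℂ))
      atTop (𝓝 (inner ℂ (A x) x)) :=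
    ((continuous_inner.comp (Continuous.prodMk continuous_id continuous_const)).tendsto _).comp (hA x)
  have key : ∀ n : ℕ, (inner ℂ ((ContinuousLinearMap.adjoint (T ^ n)) ((T ^ n) x)) x : ℂ)
      = (‖(T ^ n) x‖ : ℂ) ^ 2 := by
    intro n
    rw [ContinuousLinearMap.adjoint_inner_left]
    rw [inner_self_eq_norm_sq_to_K]
    norm_cast
  have hsq : Tendsto (fun n : ℕ => ‖(T ^ n) x‖ ^ 2) atTop
      (𝓝 (Complex.re (inner ℂ (A x) x))) := by
    have := (Complex.continuous_re.tendsto _).comp hinner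
    simp only [Function.comp_def, key, ← Complex.ofReal_pow, Complex.ofReal_re] at this
    exact this
  set r := Complex.re (inner ℂ (A x) x) with hr
  -- main implication: r = ‖x‖² → A x = x
  have hAx_le : ‖A x‖ ≤ ‖x‖ := by
    refine le_of_tendsto (hA x).norm (Eventually.of_forall fun n => ?_)
    calc ‖(ContinuousLinearMap.adjoint (T ^ n)) ((T ^ n) x)‖
        ≤ ‖ContinuousLinearMap.adjoint (T ^ n)‖ * ‖(T ^ n) x‖ := le_opNorm _ _
      _ ≤ 1 * ‖x‖ := by
          apply mul_le_mul _ (hf_le n) (norm_nonneg _) zero_le_one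
          rw [LinearIsometryEquiv.norm_map]
          exact opNorm_le_bound _ zero_le_one (fun y => by simpa using hTnx n y)
      _ = ‖x‖ := one_mul _
  have main : r = ‖x‖ ^ 2 → A x = x := by
    intro hreq
    have h2 : ‖A x - x‖ ^ 2 ≤ 0 := by
      rw [@norm_sub_sq ℂ]
      have h1 : RCLike.re (inner ℂ (A x) x : ℂ) = ‖x‖ ^ 2 := hreq
      have h3 : ‖A x‖ ^ 2 ≤ ‖x‖ ^ 2 := pow_le_pow_left₀ (norm_nonneg _) hAx_le 2
      linarith
    have := pow_eq_zero_iff (n := 2) (by norm_num) |>.mp (le_antisymm h2 (by positivity))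
    rwa [norm_eq_zero, sub_eq_zero] at this
  have fwd : A x = x → Tendsto (fun n : ℕ => ‖(T ^ n) x‖) atTop (𝓝 ‖x‖) := by
    intro h
    have hreq : r = ‖x‖ ^ 2 := by
      rw [hr, h]; exact inner_self_eq_norm_sq (𝕜 := ℂ) x
    rw [hreq] at hsq
    have := (Real.continuous_sqrt.tendsto _).comp hsq
    simp only [Function.comp_def, Real.sqrt_sq (norm_nonneg _)] at this
    exact this
  have rev2 : Tendsto (fun n : ℕ => ‖(T ^ n) x‖) atTop (𝓝 ‖x‖) → A x = x := by
    intro h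
    exact main (tendsto_nhds_unique hsq (h.pow 2))
  have fwd1 : A x = x → ∀ n : ℕ, ‖(T ^ n) x‖ = ‖x‖ := fun h n =>
    le_antisymm (hf_le n)
      (le_of_tendsto (fwd h) (eventually_atTop.2 ⟨n, fun m hm => hanti hm⟩))
  refine ⟨⟨fwd1, fun h => rev2 ?_⟩, ⟨fwd, rev2⟩⟩
  simp only [h]
  exact tendsto_const_nhds
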